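/- arXiv:1804.10006 — 2 statements merged into one kernel-verified Lean document; each statement's English description precedes it below -/
import Mathlib

section
/- Let V₁, V₂ : E → E be continuous vector fields, let X₁ be a global flow of V₁, and let X₂ be a global flow of V₂ which is continuously differentiable as a map ℝ × E → E and satisfies the group property X₂(t + s, y) = X₂(t, X₂(s, y)). Fix t ∈ ℝ and y ∈ E, and define F(s) = X₂(t − s, X₁(s, y)). Then for every s ∈ ℝ, F is differentiable at s with F′(s) = D_yX₂(t − s, X₁(s, y))((V₁ − V₂)(X₁(s, y))). -/
/-- **Simplified derivative of `F (s) = X₂ (t − s, X₁ (s, y))` via the group property.**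
Let `X₁` be a global flow of the continuous vector field `V₁`, and `X₂` a `C¹` global
flow of the continuous vector field `V₂` satisfying the group property.  Then for fixed
`t` and `y`, `F (s) = X₂ (t − s, X₁ (s, y))` is differentiable at every `s` with
`F′(s) = D_yX₂(t − s, X₁(s, y))((V₁ − V₂)(X₁(s, y)))`. -/
theorem flow_mismatch_derivative_simplified
    {E : Type*} [NormedAddCommGroup E] [NormedSpace ℝ E] [FiniteDimensional ℝ E]
    (V₁ V₂ : E → E) (hV₁ : Continuous V₁) (hV₂ : Continuous V₂)
    (X₁ X₂ : ℝ × E → E)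
    (hX₁0 : ∀ y : E, X₁ (0, y) = y)
    (hX₁ : ∀ (s : ℝ) (y : E), HasDerivAt (fun t : ℝ => X₁ (t, y)) (V₁ (X₁ (s, y))) s)
    (hX₂0 : ∀ y : E, X₂ (0, y) = y)
    (hX₂ : ∀ (s : ℝ) (y : E), HasDerivAt (fun t : ℝ => X₂ (t, y)) (V₂ (X₂ (s, y))) s)
    (hC1 : ContDiff ℝ 1 X₂)
    (hgrp : ∀ (s t : ℝ) (y : E), X₂ (t + s, y) = X₂ (t, X₂ (s, y)))
    (t : ℝ) (y : E) :
    ∀ s : ℝ,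
      HasDerivAt (fun s : ℝ => X₂ (t - s, X₁ (s, y)))
        (fderiv ℝ (fun w : E => X₂ (t - s, w)) (X₁ (s, y))
          (V₁ (X₁ (s, y)) - V₂ (X₁ (s, y)))) s := by
  have hd : Differentiable ℝ X₂ := hC1.differentiable one_ne_zero
  -- the spatial slice has the expected Fréchet derivative
  have hslice : ∀ (τ : ℝ) (w : E), HasFDerivAt (fun w : E => X₂ (τ, w))
      ((fderiv ℝ X₂ (τ, w)).comp (ContinuousLinearMap.inr ℝ ℝ E)) w := by
    intro τ w
    have h1 : HasFDerivAt X₂ (fderiv ℝ X₂ (τ, w)) (τ, w) := (hd _).hasFDerivAt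
    have h2 : HasFDerivAt (fun w : E => ((τ, w) : ℝ × E))
        (ContinuousLinearMap.inr ℝ ℝ E) w :=
      HasFDerivAt.prodMk (hasFDerivAt_const τ w) (hasFDerivAt_id w)
    exact h1.comp w h2
  -- the time derivative of `X₂` is `V₂`
  have htime : ∀ (τ : ℝ) (w : E), fderiv ℝ X₂ (τ, w) (1, 0) = V₂ (X₂ (τ, w)) := by
    intro τ w
    have h1 : HasFDerivAt X₂ (fderiv ℝ X₂ (τ, w)) (τ, w) := (hd _).hasFDerivAt
    have h2 : HasDerivAt (fun u : ℝ => ((u, w) : ℝ × E)) ((1 : ℝ), (0 : E)) τ :=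
      HasDerivAt.prodMk (hasDerivAt_id τ) (hasDerivAt_const τ w)
    exact (h1.comp_hasDerivAt τ h2).unique (hX₂ τ w)
  intro s
  set z := X₁ (s, y) with hz
  set D := fderiv ℝ (fun w : E => X₂ (t - s, w)) z with hD
  have hDf : HasFDerivAt (fun w : E => X₂ (t - s, w)) D z := by
    rw [hD, (hslice (t - s) z).fderiv]; exact hslice (t - s) z
  have hDeq : ∀ v : E, D v = fderiv ℝ X₂ (t - s, z) (0, v) := by
    intro v
    rw [hD, (hslice (t - s) z).fderiv]
    rfl
  -- invariance: D (V₂ z) = V₂ (X₂ (t - s, z))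
  have hinv : D (V₂ z) = V₂ (X₂ (t - s, z)) := by
    have hi : HasDerivAt (fun u : ℝ => t - s + u) 1 0 := by
      simpa using (hasDerivAt_id (0 : ℝ)).const_add (t - s)
    have h0 : HasDerivAt (fun u : ℝ => X₂ (u, z)) (V₂ (X₂ (t - s, z))) (t - s + 0) := by
      simpa using hX₂ (t - s) z
    have hg1 : HasDerivAt (fun u : ℝ => X₂ (t - s + u, z)) (V₂ (X₂ (t - s, z))) 0 := by
      simpa [Function.comp_def] using h0.scomp 0 hi
    have hinner : HasDerivAt (fun u : ℝ => X₂ (u, z)) (V₂ z) 0 := by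
      have := hX₂ 0 z
      rwa [hX₂0 z] at this
    have hg2 : HasDerivAt (fun u : ℝ => X₂ (t - s, X₂ (u, z))) (D (V₂ z)) 0 := by
      have : HasFDerivAt (fun w : E => X₂ (t - s, w)) D (X₂ (0, z)) := by
        rwa [hX₂0 z]
      exact this.comp_hasDerivAt 0 hinner
    have heq : (fun u : ℝ => X₂ (t - s + u, z)) = fun u : ℝ => X₂ (t - s, X₂ (u, z)) := by
      funext u; exact hgrp u (t - s) z
    rw [heq] at hg1
    exact hg2.unique hg1
  -- derivative of the curve `s' ↦ (t - s', X₁ (s', y))`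
  have hγ : HasDerivAt (fun s' : ℝ => ((t - s', X₁ (s', y)) : ℝ × E))
      ((-1 : ℝ), V₁ z) s :=
    HasDerivAt.prodMk ((hasDerivAt_id s).const_sub t) (hX₁ s y)
  have hF : HasDerivAt (fun s' : ℝ => X₂ (t - s', X₁ (s', y)))
      (fderiv ℝ X₂ (t - s, z) (-1, V₁ z)) s :=
    ((hd (t - s, z)).hasFDerivAt).comp_hasDerivAt s hγ
  have key : fderiv ℝ X₂ (t - s, z) (-1, V₁ z) = D (V₁ z - V₂ z) := by
    have hsplit : ((-1 : ℝ), V₁ z) = ((0 : ℝ), V₁ z) - ((1 : ℝ), (0 : E)) := by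
      simp [Prod.ext_iff]
    rw [hsplit, map_sub, htime (t - s) z, ← hDeq (V₁ z), ← hinv, ← map_sub]
  rw [← hD] at *
  rw [key] at hF
  exact hF
end

section
/- Let V₁, V₂ : E → E be continuous vector fields, let X₁ be a global flow of V₁, and let X₂ be a global flow of V₂ which is continuously differentiable as a map ℝ × E → E and satisfies the group property X₂(t + s, y) = X₂(t, X₂(s, y)). Then for every t ≥ 0 and every y ∈ E, the Stefanov–Uhlmann identity holds: X₁(t, y) − X₂(t, y) = ∫₀ᵗ D_yX₂(t − s, X₁(s, y))((V₁ − V₂)(X₁(s, y))) ds. -/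
/-- **The Stefanov–Uhlmann identity.**
Let `X₁` be a global flow of the continuous vector field `V₁`, and `X₂` a `C¹` global
flow of the continuous vector field `V₂` satisfying the group property.  Then for every
`t ≥ 0` and `y`,
`X₁(t, y) − X₂(t, y) = ∫₀ᵗ D_yX₂(t − s, X₁(s, y))((V₁ − V₂)(X₁(s, y))) ds`. -/
theorem stefanov_uhlmann_identity
    {E : Type*} [NormedAddCommGroup E] [NormedSpace ℝ E] [FiniteDimensional ℝ E]
    (V₁ V₂ : E → E) (hV₁ : Continuous V₁) (hV₂ : Continuous V₂)
    (X₁ X₂ : ℝ × E → E)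
    (hX₁0 : ∀ y : E, X₁ (0, y) = y)
    (hX₁ : ∀ (s : ℝ) (y : E), HasDerivAt (fun t : ℝ => X₁ (t, y)) (V₁ (X₁ (s, y))) s)
    (hX₂0 : ∀ y : E, X₂ (0, y) = y)
    (hX₂ : ∀ (s : ℝ) (y : E), HasDerivAt (fun t : ℝ => X₂ (t, y)) (V₂ (X₂ (s, y))) s)
    (hC1 : ContDiff ℝ 1 X₂)
    (hgrp : ∀ (s t : ℝ) (y : E), X₂ (t + s, y) = X₂ (t, X₂ (s, y))) :
    ∀ (t : ℝ), 0 ≤ t → ∀ (y : E),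
      X₁ (t, y) - X₂ (t, y) =
        ∫ s in (0:ℝ)..t,
          fderiv ℝ (fun w : E => X₂ (t - s, w)) (X₁ (s, y))
            (V₁ (X₁ (s, y)) - V₂ (X₁ (s, y))) := by
  have hdX₂ : ∀ p : ℝ × E, HasFDerivAt X₂ (fderiv ℝ X₂ p) p := fun p =>
    ((hC1.differentiable one_ne_zero) p).hasFDerivAt
  -- derivative of the partial map `w ↦ X₂ (τ, w)`
  have hpart : ∀ (τ : ℝ) (z : E),
      HasFDerivAt (fun w : E => X₂ (τ, w))
        ((fderiv ℝ X₂ (τ, z)).comp (ContinuousLinearMap.inr ℝ ℝ E)) z := fun τ z =>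
    (hdX₂ (τ, z)).comp z (hasFDerivAt_prodMk_right τ z)
  -- time derivative: `fderiv X₂ (τ,z) (1,0) = V₂ (X₂ (τ,z))`
  have htime : ∀ (τ : ℝ) (z : E), fderiv ℝ X₂ (τ, z) (1, 0) = V₂ (X₂ (τ, z)) := by
    intro τ z
    have h1 : HasDerivAt (fun t : ℝ => X₂ (t, z)) (fderiv ℝ X₂ (τ, z) (1, 0)) τ :=
      (hdX₂ (τ, z)).comp_hasDerivAt τ ((hasDerivAt_id τ).prodMk (hasDerivAt_const τ z))
    exact h1.unique (hX₂ τ z)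
  -- group property derivative: `fderiv X₂ (τ,z) (0, V₂ z) = V₂ (X₂ (τ,z))`
  have hgrp' : ∀ (τ : ℝ) (z : E), fderiv ℝ X₂ (τ, z) (0, V₂ z) = V₂ (X₂ (τ, z)) := by
    intro τ z
    have hz : X₂ ((0 : ℝ), z) = z := hX₂0 z
    have h1 : HasDerivAt (fun s : ℝ => X₂ (τ, X₂ (s, z)))
        (((fderiv ℝ X₂ (τ, z)).comp (ContinuousLinearMap.inr ℝ ℝ E)) (V₂ z)) 0 := by
      have h := (hpart τ z).comp_hasDerivAt_of_eq 0 (hX₂ 0 z) (by rw [hz])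
      simpa [Function.comp_def, hz] using h
    have h2 : HasDerivAt (fun s : ℝ => X₂ (τ + s, z)) (V₂ (X₂ (τ, z))) 0 := by
      have hg : HasDerivAt (fun s : ℝ => τ + s) 1 0 := (hasDerivAt_id 0).const_add τ
      have h := (hX₂ τ z).hasFDerivAt.comp_hasDerivAt_of_eq 0 hg (by rw [add_zero])
      simpa [Function.comp_def] using h
    simp only [hgrp] at h2
    simpa using h1.unique h2
  intro t _ y
  set F : ℝ → E := fun s => X₂ (t - s, X₁ (s, y)) with hF
  set f' : ℝ → E := fun s =>
    fderiv ℝ (fun w : E => X₂ (t - s, w)) (X₁ (s, y))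
      (V₁ (X₁ (s, y)) - V₂ (X₁ (s, y))) with hf'
  have hpfd : ∀ (τ : ℝ) (z : E), fderiv ℝ (fun w : E => X₂ (τ, w)) z
      = (fderiv ℝ X₂ (τ, z)).comp (ContinuousLinearMap.inr ℝ ℝ E) := fun τ z =>
    (hpart τ z).fderiv
  have hFd : ∀ s : ℝ, HasDerivAt F (f' s) s := by
    intro s
    have hg : HasDerivAt (fun s : ℝ => ((t - s : ℝ), X₁ (s, y)))
        ((-1 : ℝ), V₁ (X₁ (s, y))) s :=
      by simpa using ((hasDerivAt_const s t).sub (hasDerivAt_id s)).prodMk (hX₁ s y)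
    have h := (hdX₂ ((t - s), X₁ (s, y))).comp_hasDerivAt s hg
    have key : fderiv ℝ X₂ ((t - s), X₁ (s, y)) ((-1 : ℝ), V₁ (X₁ (s, y))) = f' s := by
      have e1 : ((-1 : ℝ), V₁ (X₁ (s, y)))
          = ((0 : ℝ), V₁ (X₁ (s, y)) - V₂ (X₁ (s, y)))
            + ((0 : ℝ), V₂ (X₁ (s, y))) - ((1 : ℝ), (0 : E)) := by
        simp [Prod.ext_iff]
      rw [e1, map_sub, map_add, htime, hgrp', hf']
      simp only [hpfd]
      simp
    rw [← key]
    exact h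
  have hX₁c : Continuous fun s : ℝ => X₁ (s, y) := by
    rw [continuous_iff_continuousAt]
    exact fun s => (hX₁ s y).continuousAt
  have hcont : Continuous f' := by
    simp only [hf', hpfd]
    have hL : Continuous fun s : ℝ =>
        (fderiv ℝ X₂ ((t - s), X₁ (s, y))).comp (ContinuousLinearMap.inr ℝ ℝ E) := by
      exact ((hC1.continuous_fderiv one_ne_zero).comp
        ((continuous_const.sub continuous_id).prodMk hX₁c)).clm_comp continuous_const
    exact hL.clm_apply ((hV₁.comp hX₁c).sub (hV₂.comp hX₁c))
  have hint := intervalIntegral.integral_eq_sub_of_hasDerivAt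
    (fun s _ => hFd s) (hcont.intervalIntegrable 0 t)
  rw [hint, hF]
  simp [hX₁0, hX₂0]
end
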